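/- For every real number x, the following identity holds in ℝ[[q]]: (1 + 2∑_{n≥1} q^{2n²})·(1 + 2∑_{n≥1} T_{4n}(x/2) q^{2n²}) = (1 + 2∑_{n≥1} T_{4n}(x/2) q^{4n²})² + 4q²·(∑_{n≥1} T_{4n−2}(x/2) q^{4n(n−1)})². -/

import Mathlib

/-- The formal power series `∑_{n ≥ 1} c(n) q^{e(n)}` in `ℝ[[q]]`, defined coefficientwise.
(For each exponent function `e` used here, any `n ≥ 1` with `e n = k` satisfies `n ≤ k + 1`,
so the truncated range captures every term.) -/
noncomputable def mkSum (e : ℕ → ℕ) (c : ℕ → ℝ) : PowerSeries ℝ :=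
  PowerSeries.mk fun k => ∑ n ∈ Finset.range (k + 2), if 1 ≤ n ∧ e n = k then c n else 0

/-- Auxiliary: a "theta-like" series `∑_{a ∈ ℤ} c a q^{w a}`, truncated coefficientwise. -/
noncomputable def thetaSer (w : ℤ → ℕ) (c : ℤ → ℝ) : PowerSeries ℝ :=
  PowerSeries.mk fun k => ∑ a ∈ Finset.Icc (-(k : ℤ)) k, if w a = k then c a else 0

/-- Transport a sum of indicator terms along an injection-surjection. -/
lemma sum_ind {α β : Type*} (S : Finset α) (T : Finset β)
    (P : α → Prop) (Q : β → Prop) [DecidablePred P] [DecidablePred Q]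
    (f : α → ℝ) (g : β → ℝ) (ι : α → β)
    (hmem : ∀ a ∈ S, P a → ι a ∈ T)
    (hQ : ∀ a ∈ S, P a → Q (ι a))
    (hval : ∀ a ∈ S, P a → g (ι a) = f a)
    (hinj : ∀ a ∈ S, P a → ∀ a' ∈ S, P a' → ι a = ι a' → a = a')
    (hsurj : ∀ b ∈ T, Q b → ∃ a, a ∈ S ∧ P a ∧ ι a = b) :
    (∑ a ∈ S, if P a then f a else 0) = ∑ b ∈ T, if Q b then g b else 0 := by
  rw [← Finset.sum_filter, ← Finset.sum_filter]
  refine Finset.sum_bij (fun a _ => ι a) ?_ ?_ ?_ ?_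
  · intro a ha
    rw [Finset.mem_filter] at ha ⊢
    exact ⟨hmem a ha.1 ha.2, hQ a ha.1 ha.2⟩
  · intro a ha a' ha' h
    rw [Finset.mem_filter] at ha ha'
    exact hinj a ha.1 ha.2 a' ha'.1 ha'.2 h
  · intro b hb
    rw [Finset.mem_filter] at hb
    obtain ⟨a, ha, hPa, rfl⟩ := hsurj b hb.1 hb.2
    exact ⟨a, Finset.mem_filter.2 ⟨ha, hPa⟩, rfl⟩
  · intro a ha
    rw [Finset.mem_filter] at ha
    exact (hval a ha.1 ha.2).symm

lemma ite_mul_ite' (P Q : Prop) [Decidable P] [Decidable Q] (a b : ℝ) :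
    (if P then a else 0) * (if Q then b else 0) = if P ∧ Q then a * b else 0 := by
  split_ifs <;> first | rfl | tauto | simp

lemma coeff_thetaSer (w : ℤ → ℕ) (c : ℤ → ℝ) (hwb : ∀ a, a.natAbs ≤ w a)
    (hwn : ∀ a, w (-a) = w a) (hcn : ∀ a, c (-a) = c a) (k : ℕ) :
    PowerSeries.coeff k (thetaSer w c) =
      (if w 0 = k then c 0 else 0) +
        2 * ∑ n ∈ Finset.range (k + 2), if 1 ≤ n ∧ w n = k then c n else 0 := by
  rw [thetaSer, PowerSeries.coeff_mk]
  have hsplit : Finset.Icc (-(k : ℤ)) k = Finset.Icc (-(k : ℤ)) (-1) ∪ Finset.Icc 0 k := by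
    ext a; simp only [Finset.mem_Icc, Finset.mem_union]; omega
  have hdisj : Disjoint (Finset.Icc (-(k : ℤ)) (-1)) (Finset.Icc (0 : ℤ) k) := by
    rw [Finset.disjoint_left]
    intro a h1 h2
    rw [Finset.mem_Icc] at h1 h2
    omega
  rw [hsplit, Finset.sum_union hdisj]
  have h0k : Finset.Icc (0 : ℤ) k = insert (0 : ℤ) (Finset.Icc (1 : ℤ) (k : ℤ)) := by
    ext a; simp only [Finset.mem_Icc, Finset.mem_insert]; omega
  rw [h0k, Finset.sum_insert (by simp)]
  have hpos : (∑ a ∈ Finset.Icc (1 : ℤ) k, if w a = k then c a else 0)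
      = ∑ n ∈ Finset.range (k + 2), if 1 ≤ n ∧ w n = k then c n else 0 := by
    refine sum_ind _ _ _ _ _ _ (fun a => a.toNat) ?_ ?_ ?_ ?_ ?_
    · intro a ha _
      rw [Finset.mem_Icc] at ha
      rw [Finset.mem_range]
      omega
    · intro a ha hP
      rw [Finset.mem_Icc] at ha
      have h : ((a.toNat : ℤ)) = a := Int.toNat_of_nonneg (by omega)
      refine ⟨by omega, ?_⟩
      rw [h]; exact hP
    · intro a ha _
      rw [Finset.mem_Icc] at ha
      have h : ((a.toNat : ℤ)) = a := Int.toNat_of_nonneg (by omega)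
      rw [h]
    · intro a ha _ a' ha' _ h
      rw [Finset.mem_Icc] at ha ha'
      omega
    · intro n hn hQ
      refine ⟨(n : ℤ), ?_, hQ.2, by simp⟩
      rw [Finset.mem_Icc]
      have h1 := hwb (n : ℤ)
      rw [Int.natAbs_natCast, hQ.2] at h1
      omega
  have hneg : (∑ a ∈ Finset.Icc (-(k : ℤ)) (-1), if w a = k then c a else 0)
      = ∑ a ∈ Finset.Icc (1 : ℤ) k, if w a = k then c a else 0 := by
    refine sum_ind _ _ _ _ _ _ (fun a => -a) ?_ ?_ ?_ ?_ ?_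
    · intro a ha _
      rw [Finset.mem_Icc] at ha ⊢
      omega
    · intro a _ hP
      rw [hwn]; exact hP
    · intro a _ _
      exact hcn a
    · intro a _ _ a' _ _ h
      omega
    · intro b hb hQ
      refine ⟨-b, ?_, by rw [hwn]; exact hQ, by show -(-b) = b; ring⟩
      rw [Finset.mem_Icc] at hb ⊢
      omega
  rw [hneg, hpos]; ring

lemma coeff_thetaSer_mul (w v : ℤ → ℕ) (c d : ℤ → ℝ) (hwb : ∀ a, a.natAbs ≤ w a)
    (hvb : ∀ a, a.natAbs ≤ v a) (k : ℕ) :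
    PowerSeries.coeff k (thetaSer w c * thetaSer v d) =
      ∑ p ∈ Finset.Icc (-(k : ℤ)) k ×ˢ Finset.Icc (-(k : ℤ)) k,
        if w p.1 + v p.2 = k then c p.1 * d p.2 else 0 := by
  rw [PowerSeries.coeff_mul]
  have hcoe : ∀ (m : ℕ) (w' : ℤ → ℕ) (c' : ℤ → ℝ), (∀ a, a.natAbs ≤ w' a) → m ≤ k →
      PowerSeries.coeff m (thetaSer w' c')
        = ∑ a ∈ Finset.Icc (-(k : ℤ)) k, if w' a = m then c' a else 0 := by
    intro m w' c' hb hm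
    rw [thetaSer, PowerSeries.coeff_mk]
    refine Finset.sum_subset ?_ ?_
    · apply Finset.Icc_subset_Icc <;> omega
    · intro a ha hna
      rw [Finset.mem_Icc] at ha hna
      rw [if_neg]
      intro h
      have := hb a
      rw [h] at this
      omega
  have h1 : ∀ p ∈ Finset.HasAntidiagonal.antidiagonal k,
      (PowerSeries.coeff p.1 (thetaSer w c)) * (PowerSeries.coeff p.2 (thetaSer v d))
        = ∑ q ∈ Finset.Icc (-(k : ℤ)) k ×ˢ Finset.Icc (-(k : ℤ)) k,
            if w q.1 = p.1 ∧ v q.2 = p.2 then c q.1 * d q.2 else 0 := by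
    intro p hp
    rw [Finset.HasAntidiagonal.mem_antidiagonal] at hp
    rw [hcoe p.1 w c hwb (by omega), hcoe p.2 v d hvb (by omega), Finset.sum_mul_sum,
      Finset.sum_product]
    refine Finset.sum_congr rfl fun a _ => Finset.sum_congr rfl fun b _ => ?_
    exact ite_mul_ite' _ _ _ _
  rw [Finset.sum_congr rfl h1, Finset.sum_comm]
  refine Finset.sum_congr rfl fun q _ => ?_
  have h2 : ∀ p : ℕ × ℕ, (if w q.1 = p.1 ∧ v q.2 = p.2 then c q.1 * d q.2 else 0)
      = if p = (w q.1, v q.2) then c q.1 * d q.2 else 0 := by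
    intro p
    refine if_congr ?_ rfl rfl
    rw [Prod.ext_iff]
    constructor
    · rintro ⟨hh1, hh2⟩; exact ⟨hh1.symm, hh2.symm⟩
    · rintro ⟨hh1, hh2⟩; exact ⟨hh1.symm, hh2.symm⟩
  rw [Finset.sum_congr rfl fun p _ => h2 p, Finset.sum_ite_eq' (Finset.HasAntidiagonal.antidiagonal k)]
  simp only [Finset.HasAntidiagonal.mem_antidiagonal]

lemma coeff_two_mul (k : ℕ) (f : PowerSeries ℝ) :
    PowerSeries.coeff k (2 * f) = 2 * PowerSeries.coeff k f := by
  rw [two_mul, map_add, two_mul]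

/-- Conversion of `1 + 2 * mkSum e c` to a theta series. -/
lemma one_add_two_mkSum (e : ℕ → ℕ) (c : ℕ → ℝ) (w : ℤ → ℕ) (c' : ℤ → ℝ)
    (he0 : e 0 = 0) (hc0 : c' 0 = 1)
    (hw : ∀ n : ℕ, w n = e n) (hwn : ∀ a, w (-a) = w a) (hcn : ∀ a, c' (-a) = c' a)
    (hcc : ∀ n : ℕ, c' n = c n) (hwb : ∀ a, a.natAbs ≤ w a) :
    1 + 2 * mkSum e c = thetaSer w c' := by
  ext k
  rw [map_add, coeff_two_mul, PowerSeries.coeff_one,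
    coeff_thetaSer w c' hwb hwn hcn k, mkSum, PowerSeries.coeff_mk]
  have h1 : (if w 0 = k then c' 0 else 0) = (if k = 0 then (1 : ℝ) else 0) := by
    have hw0 : w 0 = 0 := by
      have := hw 0
      simpa [he0] using this
    rw [hw0, hc0]
    exact if_congr eq_comm rfl rfl
  have h2 : (∑ n ∈ Finset.range (k + 2), if 1 ≤ n ∧ w n = k then c' n else 0)
      = ∑ n ∈ Finset.range (k + 2), if 1 ≤ n ∧ e n = k then c n else 0 := by
    refine Finset.sum_congr rfl fun n _ => ?_
    rw [hw n, hcc n]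
  rw [h1, h2]

/-- Evaluated Chebyshev polynomial. -/
noncomputable def cheb (x : ℝ) (u : ℤ) : ℝ := (Polynomial.Chebyshev.T ℝ u).eval (x / 2)

lemma cheb_neg (x : ℝ) (u : ℤ) : cheb x (-u) = cheb x u := by
  rw [cheb, cheb, Polynomial.Chebyshev.T_neg]

lemma cheb_zero (x : ℝ) : cheb x 0 = 1 := by
  rw [cheb, Polynomial.Chebyshev.T_zero, Polynomial.eval_one]

lemma cheb_congr (x : ℝ) {u v : ℤ} (h : u = v) : cheb x u = cheb x v := by rw [h]

lemma cheb_addsub (x : ℝ) (s t : ℤ) :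
    2 * (cheb x s * cheb x t) = cheb x (s + t) + cheb x (s - t) := by
  have h := congrArg (Polynomial.eval (x / 2)) (Polynomial.Chebyshev.T_mul_T (R := ℝ) s t)
  simpa [cheb, Polynomial.eval_mul, Polynomial.eval_add, mul_assoc] using h

lemma natAbs_le_sq (a : ℤ) : a.natAbs ≤ a.natAbs ^ 2 :=
  Nat.le_self_pow (by norm_num) _

lemma natAbs_le_mul_sq (c : ℕ) (hc : 0 < c) (a : ℤ) : a.natAbs ≤ c * a.natAbs ^ 2 :=
  le_trans (natAbs_le_sq a) (Nat.le_mul_of_pos_left _ hc)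

lemma sqcast (c : ℕ) (a b : ℤ) (k : ℕ) :
    c * a.natAbs ^ 2 + c * b.natAbs ^ 2 = k ↔ (c : ℤ) * a ^ 2 + (c : ℤ) * b ^ 2 = (k : ℤ) := by
  rw [← Nat.cast_inj (R := ℤ)]
  push_cast [sq_abs]
  tauto

lemma sqcast1 (a b : ℤ) (k : ℕ) :
    a.natAbs ^ 2 + b.natAbs ^ 2 = k ↔ a ^ 2 + b ^ 2 = (k : ℤ) := by
  rw [← Nat.cast_inj (R := ℤ)]
  push_cast [sq_abs]
  tauto

lemma memIcc_of_sq_le {a : ℤ} {k : ℕ} (h : a ^ 2 ≤ (k : ℤ)) :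
    a ∈ Finset.Icc (-(k : ℤ)) (k : ℤ) := by
  have h1 : ((a.natAbs : ℤ)) ^ 2 ≤ (k : ℤ) := by rw [Int.natAbs_sq]; exact h
  have h2 : a.natAbs ^ 2 ≤ k := by exact_mod_cast h1
  have h3 := natAbs_le_sq a
  rw [Finset.mem_Icc]
  omega

lemma twoX_mkSum_eq (x : ℝ) :
    2 * PowerSeries.X * mkSum (fun n => 4 * n * (n - 1))
        (fun n => (Polynomial.Chebyshev.T ℝ (4 * (n : ℤ) - 2)).eval (x / 2))
      = thetaSer (fun a => a.natAbs ^ 2) (fun u => if u % 2 = 1 then cheb x (2 * u) else 0) := by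
  have hcn : ∀ a : ℤ, (if (-a) % 2 = 1 then cheb x (2 * -a) else 0)
      = (if a % 2 = 1 then cheb x (2 * a) else 0) := by
    intro a
    by_cases h : a % 2 = 1
    · rw [if_pos h, if_pos (by omega), show (2 : ℤ) * -a = -(2 * a) by ring, cheb_neg]
    · rw [if_neg h, if_neg (by omega)]
  rw [mul_assoc]
  ext k
  rw [coeff_two_mul,
    coeff_thetaSer _ _ natAbs_le_sq (fun a => by simp [Int.natAbs_neg]) hcn k]
  cases k with
  | zero =>
    have h0 : PowerSeries.coeff 0 (PowerSeries.X * mkSum (fun n => 4 * n * (n - 1))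
        (fun n => (Polynomial.Chebyshev.T ℝ (4 * (n : ℤ) - 2)).eval (x / 2))) = 0 := by
      rw [PowerSeries.coeff_zero_eq_constantCoeff, map_mul, PowerSeries.constantCoeff_X, zero_mul]
    rw [h0, mul_zero, Finset.sum_range_succ, Finset.sum_range_one]
    norm_num
  | succ K =>
    rw [PowerSeries.coeff_succ_X_mul, mkSum, PowerSeries.coeff_mk]
    have hz : (if (0 : ℤ).natAbs ^ 2 = K + 1
        then (if (0 : ℤ) % 2 = 1 then cheb x (2 * 0) else 0) else 0) = 0 := by
      simp
    rw [hz, zero_add]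
    congr 1
    have hflat : (∑ n ∈ Finset.range (K + 1 + 2),
          if 1 ≤ n ∧ ((n : ℤ)).natAbs ^ 2 = K + 1
            then (if ((n : ℤ)) % 2 = 1 then cheb x (2 * (n : ℤ)) else 0) else 0)
        = ∑ n ∈ Finset.range (K + 1 + 2),
            if 1 ≤ n ∧ n ^ 2 = K + 1 ∧ n % 2 = 1 then cheb x (2 * (n : ℤ)) else 0 := by
      refine Finset.sum_congr rfl fun n _ => ?_
      rw [Int.natAbs_natCast]
      rcases Nat.mod_two_eq_zero_or_one n with h | h
      · have h3 : ¬(1 ≤ n ∧ n ^ 2 = K + 1 ∧ n % 2 = 1) := by rintro ⟨-, -, hh⟩; omega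
        rw [if_neg h3]
        split_ifs with h1 h2
        · exfalso; omega
        · rfl
        · rfl
      · by_cases h1 : 1 ≤ n ∧ n ^ 2 = K + 1
        · rw [if_pos h1, if_pos (by omega : ((n : ℤ)) % 2 = 1), if_pos ⟨h1.1, h1.2, h⟩]
        · rw [if_neg h1, if_neg (by tauto)]
    refine Eq.trans ?_ hflat.symm
    refine sum_ind _ _ _ _ _ _ (fun m => 2 * m - 1) ?_ ?_ ?_ ?_ ?_
    · rintro m hm ⟨h1, h2⟩
      rw [Finset.mem_range] at hm ⊢
      obtain ⟨j, rfl⟩ : ∃ j, m = j + 1 := ⟨m - 1, by omega⟩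
      rw [Nat.add_sub_cancel] at h2
      rw [show 2 * (j + 1) - 1 = 2 * j + 1 by omega]
      have hle : 2 * j ≤ 4 * (j + 1) * j := by nlinarith
      linarith
    · rintro m hm ⟨h1, h2⟩
      obtain ⟨j, rfl⟩ : ∃ j, m = j + 1 := ⟨m - 1, by omega⟩
      rw [Nat.add_sub_cancel] at h2
      rw [show 2 * (j + 1) - 1 = 2 * j + 1 by omega]
      have hsq : (2 * j + 1) ^ 2 = 4 * (j + 1) * j + 1 := by ring
      exact ⟨by omega, by linarith, by omega⟩
    · rintro m hm ⟨h1, h2⟩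
      obtain ⟨j, rfl⟩ : ∃ j, m = j + 1 := ⟨m - 1, by omega⟩
      rw [show 2 * (j + 1) - 1 = 2 * j + 1 by omega]
      have hidx : (2 * ((2 * j + 1 : ℕ) : ℤ)) = 4 * ((j + 1 : ℕ) : ℤ) - 2 := by
        push_cast; ring
      rw [hidx]
      rfl
    · rintro m hm ⟨h1, -⟩ m' hm' ⟨h1', -⟩ h
      omega
    · rintro n hn ⟨h1, h2, h3⟩
      obtain ⟨j, rfl⟩ : ∃ j, n = 2 * j + 1 := ⟨n / 2, by omega⟩
      rw [Finset.mem_range] at hn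
      have hsq : (2 * j + 1) ^ 2 = 4 * (j + 1) * j + 1 := by ring
      have hle : j ≤ 4 * (j + 1) * j := by nlinarith
      refine ⟨j + 1, ?_, ⟨by omega, ?_⟩, by omega⟩
      · rw [Finset.mem_range]
        linarith
      · rw [Nat.add_sub_cancel]
        linarith

theorem cheby_dissection_even (x : ℝ) :
    (1 + 2 * mkSum (fun n => 2 * n ^ 2) fun _ => 1) *
        (1 + 2 * mkSum (fun n => 2 * n ^ 2) fun n =>
          (Polynomial.Chebyshev.T ℝ (4 * (n : ℤ))).eval (x / 2)) =
      (1 + 2 * mkSum (fun n => 4 * n ^ 2) fun n =>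
          (Polynomial.Chebyshev.T ℝ (4 * (n : ℤ))).eval (x / 2)) ^ 2 +
        4 * PowerSeries.X ^ 2 *
          (mkSum (fun n => 4 * n * (n - 1)) fun n =>
            (Polynomial.Chebyshev.T ℝ (4 * (n : ℤ) - 2)).eval (x / 2)) ^ 2 := by
  have hw1b : ∀ a : ℤ, a.natAbs ≤ 2 * a.natAbs ^ 2 := natAbs_le_mul_sq 2 (by norm_num)
  have hw2b : ∀ a : ℤ, a.natAbs ≤ 4 * a.natAbs ^ 2 := natAbs_le_mul_sq 4 (by norm_num)
  have hA : (1 + 2 * mkSum (fun n => 2 * n ^ 2) fun _ => (1 : ℝ)) =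
      thetaSer (fun a => 2 * a.natAbs ^ 2) (fun _ => 1) := by
    refine one_add_two_mkSum _ _ _ _ (by norm_num) rfl ?_ ?_ ?_ ?_ hw1b
    · intro n; simp
    · intro a; simp [Int.natAbs_neg]
    · intro a; rfl
    · intro n; rfl
  have hB : (1 + 2 * mkSum (fun n => 2 * n ^ 2) fun n =>
        (Polynomial.Chebyshev.T ℝ (4 * (n : ℤ))).eval (x / 2)) =
      thetaSer (fun a => 2 * a.natAbs ^ 2) (fun a => cheb x (4 * a)) := by
    refine one_add_two_mkSum _ _ _ _ (by norm_num) ?_ ?_ ?_ ?_ ?_ hw1b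
    · show cheb x (4 * 0) = 1
      rw [show (4 : ℤ) * 0 = 0 by ring, cheb_zero]
    · intro n; simp
    · intro a; simp [Int.natAbs_neg]
    · intro a
      show cheb x (4 * -a) = cheb x (4 * a)
      rw [show (4 : ℤ) * -a = -(4 * a) by ring, cheb_neg]
    · intro n; rfl
  have hC : (1 + 2 * mkSum (fun n => 4 * n ^ 2) fun n =>
        (Polynomial.Chebyshev.T ℝ (4 * (n : ℤ))).eval (x / 2)) =
      thetaSer (fun a => 4 * a.natAbs ^ 2) (fun a => cheb x (4 * a)) := by
    refine one_add_two_mkSum _ _ _ _ (by norm_num) ?_ ?_ ?_ ?_ ?_ hw2b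
    · show cheb x (4 * 0) = 1
      rw [show (4 : ℤ) * 0 = 0 by ring, cheb_zero]
    · intro n; simp
    · intro a; simp [Int.natAbs_neg]
    · intro a
      show cheb x (4 * -a) = cheb x (4 * a)
      rw [show (4 : ℤ) * -a = -(4 * a) by ring, cheb_neg]
    · intro n; rfl
  have h4 : (4 : PowerSeries ℝ) * PowerSeries.X ^ 2 *
        (mkSum (fun n => 4 * n * (n - 1)) fun n =>
          (Polynomial.Chebyshev.T ℝ (4 * (n : ℤ) - 2)).eval (x / 2)) ^ 2
      = (2 * PowerSeries.X * mkSum (fun n => 4 * n * (n - 1)) fun n =>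
          (Polynomial.Chebyshev.T ℝ (4 * (n : ℤ) - 2)).eval (x / 2)) ^ 2 := by ring
  rw [hA, hB, hC, h4, twoX_mkSum_eq x]
  ext k
  rw [map_add, pow_two, pow_two,
    coeff_thetaSer_mul _ _ _ _ hw1b hw1b k,
    coeff_thetaSer_mul _ _ _ _ hw2b hw2b k,
    coeff_thetaSer_mul _ _ _ _ natAbs_le_sq natAbs_le_sq k]
  simp only [one_mul]
  have memJ : ∀ {a : ℤ}, a ^ 2 ≤ (k : ℤ) → a ∈ Finset.Icc (-(k : ℤ)) (k : ℤ) :=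
    fun h => memIcc_of_sq_le h
  -- Step 1a : LHS sum rewritten with difference index
  have hA1 : (∑ p ∈ Finset.Icc (-(k : ℤ)) (k : ℤ) ×ˢ Finset.Icc (-(k : ℤ)) (k : ℤ),
        if 2 * p.1.natAbs ^ 2 + 2 * p.2.natAbs ^ 2 = k then cheb x (4 * p.2) else 0)
      = ∑ p ∈ Finset.Icc (-(k : ℤ)) (k : ℤ) ×ˢ Finset.Icc (-(k : ℤ)) (k : ℤ),
          if p.1 ^ 2 + p.2 ^ 2 = (k : ℤ) ∧ p.1 % 2 = p.2 % 2
            then cheb x (2 * (p.1 - p.2)) else 0 := by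
    refine sum_ind _ _ _ _ _ _ (fun p => (p.1 + p.2, p.1 - p.2)) ?_ ?_ ?_ ?_ ?_
    · rintro ⟨a, b⟩ - hP
      dsimp only
      have hz : (2 : ℤ) * a ^ 2 + (2 : ℤ) * b ^ 2 = (k : ℤ) := (sqcast 2 a b k).mp hP
      rw [Finset.mem_product]
      dsimp only
      exact ⟨memJ (by linarith [sq_nonneg (a - b)]), memJ (by linarith [sq_nonneg (a + b)])⟩
    · rintro ⟨a, b⟩ - hP
      dsimp only
      have hz : (2 : ℤ) * a ^ 2 + (2 : ℤ) * b ^ 2 = (k : ℤ) := (sqcast 2 a b k).mp hP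
      exact ⟨by linarith [hz], by omega⟩
    · rintro ⟨a, b⟩ - -
      dsimp only
      exact cheb_congr x (by ring)
    · rintro ⟨a, b⟩ - - ⟨a', b'⟩ - - h
      dsimp only at h
      rw [Prod.mk.injEq] at h ⊢
      exact ⟨by omega, by omega⟩
    · rintro ⟨u, v⟩ hq ⟨hsum, hpar⟩
      dsimp only at hsum hpar
      obtain ⟨a, b, rfl, rfl⟩ : ∃ a b : ℤ, u = a + b ∧ v = a - b :=
        ⟨(u + v) / 2, (u - v) / 2, by omega, by omega⟩
      refine ⟨(a, b), ?_, (sqcast 2 a b k).mpr (by push_cast; linarith), rfl⟩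
      rw [Finset.mem_product]
      dsimp only
      exact ⟨memJ (by linarith [hsum, sq_nonneg a, sq_nonneg b]),
        memJ (by linarith [hsum, sq_nonneg a, sq_nonneg b])⟩
  -- Step 1b : LHS sum rewritten with sum index
  have hA2 : (∑ p ∈ Finset.Icc (-(k : ℤ)) (k : ℤ) ×ˢ Finset.Icc (-(k : ℤ)) (k : ℤ),
        if 2 * p.1.natAbs ^ 2 + 2 * p.2.natAbs ^ 2 = k then cheb x (4 * p.2) else 0)
      = ∑ p ∈ Finset.Icc (-(k : ℤ)) (k : ℤ) ×ˢ Finset.Icc (-(k : ℤ)) (k : ℤ),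
          if p.1 ^ 2 + p.2 ^ 2 = (k : ℤ) ∧ p.1 % 2 = p.2 % 2
            then cheb x (2 * (p.1 + p.2)) else 0 := by
    refine sum_ind _ _ _ _ _ _ (fun p => (p.2 - p.1, p.1 + p.2)) ?_ ?_ ?_ ?_ ?_
    · rintro ⟨a, b⟩ - hP
      dsimp only
      have hz : (2 : ℤ) * a ^ 2 + (2 : ℤ) * b ^ 2 = (k : ℤ) := (sqcast 2 a b k).mp hP
      rw [Finset.mem_product]
      dsimp only
      exact ⟨memJ (by linarith [sq_nonneg (a + b)]), memJ (by linarith [sq_nonneg (a - b)])⟩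
    · rintro ⟨a, b⟩ - hP
      dsimp only
      have hz : (2 : ℤ) * a ^ 2 + (2 : ℤ) * b ^ 2 = (k : ℤ) := (sqcast 2 a b k).mp hP
      exact ⟨by linarith [hz], by omega⟩
    · rintro ⟨a, b⟩ - -
      dsimp only
      exact cheb_congr x (by ring)
    · rintro ⟨a, b⟩ - - ⟨a', b'⟩ - - h
      dsimp only at h
      rw [Prod.mk.injEq] at h ⊢
      exact ⟨by omega, by omega⟩
    · rintro ⟨u, v⟩ hq ⟨hsum, hpar⟩
      dsimp only at hsum hpar
      obtain ⟨a, b, rfl, rfl⟩ : ∃ a b : ℤ, u = b - a ∧ v = a + b :=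
        ⟨(v - u) / 2, (u + v) / 2, by omega, by omega⟩
      refine ⟨(a, b), ?_, (sqcast 2 a b k).mpr (by push_cast; linarith), rfl⟩
      rw [Finset.mem_product]
      dsimp only
      exact ⟨memJ (by linarith [hsum, sq_nonneg a, sq_nonneg b]),
        memJ (by linarith [hsum, sq_nonneg a, sq_nonneg b])⟩
  -- Step 2 : product form
  have hM : (∑ p ∈ Finset.Icc (-(k : ℤ)) (k : ℤ) ×ˢ Finset.Icc (-(k : ℤ)) (k : ℤ),
        if 2 * p.1.natAbs ^ 2 + 2 * p.2.natAbs ^ 2 = k then cheb x (4 * p.2) else 0)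
      = ∑ p ∈ Finset.Icc (-(k : ℤ)) (k : ℤ) ×ˢ Finset.Icc (-(k : ℤ)) (k : ℤ),
          if p.1 ^ 2 + p.2 ^ 2 = (k : ℤ) ∧ p.1 % 2 = p.2 % 2
            then cheb x (2 * p.1) * cheb x (2 * p.2) else 0 := by
    refine mul_left_cancel₀ (two_ne_zero' ℝ) ?_
    calc (2 : ℝ) * _ = _ + _ := two_mul _
    _ = (∑ p ∈ Finset.Icc (-(k : ℤ)) (k : ℤ) ×ˢ Finset.Icc (-(k : ℤ)) (k : ℤ),
          if p.1 ^ 2 + p.2 ^ 2 = (k : ℤ) ∧ p.1 % 2 = p.2 % 2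
            then cheb x (2 * (p.1 - p.2)) else 0)
        + ∑ p ∈ Finset.Icc (-(k : ℤ)) (k : ℤ) ×ˢ Finset.Icc (-(k : ℤ)) (k : ℤ),
            if p.1 ^ 2 + p.2 ^ 2 = (k : ℤ) ∧ p.1 % 2 = p.2 % 2
              then cheb x (2 * (p.1 + p.2)) else 0 := by rw [← hA1, ← hA2]
    _ = ∑ p ∈ Finset.Icc (-(k : ℤ)) (k : ℤ) ×ˢ Finset.Icc (-(k : ℤ)) (k : ℤ),
          ((if p.1 ^ 2 + p.2 ^ 2 = (k : ℤ) ∧ p.1 % 2 = p.2 % 2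
            then cheb x (2 * (p.1 - p.2)) else 0)
          + (if p.1 ^ 2 + p.2 ^ 2 = (k : ℤ) ∧ p.1 % 2 = p.2 % 2
            then cheb x (2 * (p.1 + p.2)) else 0)) := Finset.sum_add_distrib.symm
    _ = ∑ p ∈ Finset.Icc (-(k : ℤ)) (k : ℤ) ×ˢ Finset.Icc (-(k : ℤ)) (k : ℤ),
          2 * (if p.1 ^ 2 + p.2 ^ 2 = (k : ℤ) ∧ p.1 % 2 = p.2 % 2
            then cheb x (2 * p.1) * cheb x (2 * p.2) else 0) := by
        refine Finset.sum_congr rfl fun p _ => ?_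
        rw [mul_ite, mul_zero]
        split_ifs with h
        · rw [cheb_addsub,
            cheb_congr x (show 2 * (p.1 - p.2) = 2 * p.1 - (2 * p.2) by ring)]
          rw [cheb_congr x (show 2 * (p.1 + p.2) = 2 * p.1 + 2 * p.2 by ring)]
          exact add_comm _ _
        · rw [add_zero]
    _ = (2 : ℝ) * _ := (Finset.mul_sum _ _ _).symm
  -- Step 3 : parity split
  have hsplitM : (∑ p ∈ Finset.Icc (-(k : ℤ)) (k : ℤ) ×ˢ Finset.Icc (-(k : ℤ)) (k : ℤ),
        if p.1 ^ 2 + p.2 ^ 2 = (k : ℤ) ∧ p.1 % 2 = p.2 % 2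
          then cheb x (2 * p.1) * cheb x (2 * p.2) else 0)
      = (∑ p ∈ Finset.Icc (-(k : ℤ)) (k : ℤ) ×ˢ Finset.Icc (-(k : ℤ)) (k : ℤ),
          if p.1 ^ 2 + p.2 ^ 2 = (k : ℤ) ∧ p.1 % 2 = 0 ∧ p.2 % 2 = 0
            then cheb x (2 * p.1) * cheb x (2 * p.2) else 0)
        + ∑ p ∈ Finset.Icc (-(k : ℤ)) (k : ℤ) ×ˢ Finset.Icc (-(k : ℤ)) (k : ℤ),
            if p.1 ^ 2 + p.2 ^ 2 = (k : ℤ) ∧ p.1 % 2 = 1 ∧ p.2 % 2 = 1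
              then cheb x (2 * p.1) * cheb x (2 * p.2) else 0 := by
    rw [← Finset.sum_add_distrib]
    refine Finset.sum_congr rfl fun p _ => ?_
    by_cases hA : p.1 ^ 2 + p.2 ^ 2 = (k : ℤ)
    · by_cases h1 : p.1 % 2 = 0 <;> by_cases h2 : p.2 % 2 = 0
      · rw [if_pos ⟨hA, by omega⟩, if_pos ⟨hA, h1, h2⟩,
          if_neg (by rintro ⟨-, hx, -⟩; omega), add_zero]
      · rw [if_neg (by rintro ⟨-, hx⟩; omega), if_neg (by rintro ⟨-, hx, hy⟩; omega),
          if_neg (by rintro ⟨-, hx, hy⟩; omega), add_zero]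
      · rw [if_neg (by rintro ⟨-, hx⟩; omega), if_neg (by rintro ⟨-, hx, hy⟩; omega),
          if_neg (by rintro ⟨-, hx, hy⟩; omega), add_zero]
      · rw [if_pos ⟨hA, by omega⟩, if_neg (by rintro ⟨-, hx, -⟩; omega),
          if_pos ⟨hA, by omega, by omega⟩, zero_add]
    · rw [if_neg (by tauto), if_neg (by tauto), if_neg (by tauto), add_zero]
  -- Step 4 : even part equals the C-sum
  have hEC : (∑ p ∈ Finset.Icc (-(k : ℤ)) (k : ℤ) ×ˢ Finset.Icc (-(k : ℤ)) (k : ℤ),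
        if 4 * p.1.natAbs ^ 2 + 4 * p.2.natAbs ^ 2 = k
          then cheb x (4 * p.1) * cheb x (4 * p.2) else 0)
      = ∑ p ∈ Finset.Icc (-(k : ℤ)) (k : ℤ) ×ˢ Finset.Icc (-(k : ℤ)) (k : ℤ),
          if p.1 ^ 2 + p.2 ^ 2 = (k : ℤ) ∧ p.1 % 2 = 0 ∧ p.2 % 2 = 0
            then cheb x (2 * p.1) * cheb x (2 * p.2) else 0 := by
    refine sum_ind _ _ _ _ _ _ (fun p => (2 * p.1, 2 * p.2)) ?_ ?_ ?_ ?_ ?_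
    · rintro ⟨a, b⟩ - hP
      dsimp only
      have hz : (4 : ℤ) * a ^ 2 + (4 : ℤ) * b ^ 2 = (k : ℤ) := (sqcast 4 a b k).mp hP
      rw [Finset.mem_product]
      dsimp only
      exact ⟨memJ (by linarith [sq_nonneg a, sq_nonneg b]),
        memJ (by linarith [sq_nonneg a, sq_nonneg b])⟩
    · rintro ⟨a, b⟩ - hP
      dsimp only
      have hz : (4 : ℤ) * a ^ 2 + (4 : ℤ) * b ^ 2 = (k : ℤ) := (sqcast 4 a b k).mp hP
      exact ⟨by linarith [hz], by omega, by omega⟩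
    · rintro ⟨a, b⟩ - -
      dsimp only
      rw [cheb_congr x (show 2 * (2 * a) = 4 * a by ring),
        cheb_congr x (show 2 * (2 * b) = 4 * b by ring)]
    · rintro ⟨a, b⟩ - - ⟨a', b'⟩ - - h
      dsimp only at h
      rw [Prod.mk.injEq] at h ⊢
      exact ⟨by omega, by omega⟩
    · rintro ⟨u, v⟩ hq ⟨hsum, h1, h2⟩
      dsimp only at hsum h1 h2
      obtain ⟨a, rfl⟩ : ∃ a : ℤ, u = 2 * a := ⟨u / 2, by omega⟩
      obtain ⟨b, rfl⟩ : ∃ b : ℤ, v = 2 * b := ⟨v / 2, by omega⟩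
      refine ⟨(a, b), ?_, (sqcast 4 a b k).mpr (by push_cast; linarith), rfl⟩
      rw [Finset.mem_product, Finset.mem_Icc, Finset.mem_Icc] at hq ⊢
      dsimp only at hq ⊢
      omega
  -- Step 5 : odd part equals the D-sum
  have hDO : (∑ p ∈ Finset.Icc (-(k : ℤ)) (k : ℤ) ×ˢ Finset.Icc (-(k : ℤ)) (k : ℤ),
        if p.1.natAbs ^ 2 + p.2.natAbs ^ 2 = k
          then (if p.1 % 2 = 1 then cheb x (2 * p.1) else 0) *
            (if p.2 % 2 = 1 then cheb x (2 * p.2) else 0) else 0)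
      = ∑ p ∈ Finset.Icc (-(k : ℤ)) (k : ℤ) ×ˢ Finset.Icc (-(k : ℤ)) (k : ℤ),
          if p.1 ^ 2 + p.2 ^ 2 = (k : ℤ) ∧ p.1 % 2 = 1 ∧ p.2 % 2 = 1
            then cheb x (2 * p.1) * cheb x (2 * p.2) else 0 := by
    refine Finset.sum_congr rfl fun p _ => ?_
    by_cases hA : p.1.natAbs ^ 2 + p.2.natAbs ^ 2 = k
    · rw [if_pos hA, ite_mul_ite']
      have hz : p.1 ^ 2 + p.2 ^ 2 = (k : ℤ) := (sqcast1 p.1 p.2 k).mp hA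
      by_cases hB : p.1 % 2 = 1 ∧ p.2 % 2 = 1
      · rw [if_pos hB, if_pos ⟨hz, hB.1, hB.2⟩]
      · rw [if_neg hB, if_neg (by tauto)]
    · rw [if_neg hA, if_neg (by rintro ⟨hzz, -⟩; exact hA ((sqcast1 p.1 p.2 k).mpr hzz))]
  exact hM.trans (hsplitM.trans (by rw [hEC, hDO]))
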